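/- Let σ > 0 and α > 0. Suppose Φ, Ψ ∈ H^1(ℝ) are continuous, satisfy the distributional equation −Φ'' + σΦ = αΨΦ, and Ψ(x) → 0 as |x| → ∞. Then there exist constants C > 0 and δ > 0 such that ∫_ℝ e^{δ|x|} Φ(x)^2 dx < ∞. -/

import Mathlib

open MeasureTheory Filter Set

lemma l2_mul_int {f g : ℝ → ℝ} (hf : MemLp f 2 (volume : Measure ℝ))
    (hg : MemLp g 2 (volume : Measure ℝ)) :
    Integrable (fun x => f x * g x) (volume : Measure ℝ) := by
  have hm : AEStronglyMeasurable (fun x => f x * g x) volume :=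
    hf.aestronglyMeasurable.mul hg.aestronglyMeasurable
  have hb : Integrable (fun x => (f x ^ 2 + g x ^ 2) / 2) volume :=
    (hf.integrable_sq.add hg.integrable_sq).div_const 2
  refine hb.mono' hm (Filter.Eventually.of_forall fun x => ?_)
  rw [Real.norm_eq_abs, abs_mul]
  nlinarith [sq_nonneg (|f x| - |g x|), sq_abs (f x), sq_abs (g x)]

lemma integrable_exp_neg_abs' {c : ℝ} (hc : 0 < c) :
    Integrable (fun x : ℝ => Real.exp (-c * |x|)) (volume : Measure ℝ) := by
  rw [← integrableOn_univ, ← @Iio_union_Ici _ _ (0 : ℝ), integrableOn_union,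
    integrableOn_Ici_iff_integrableOn_Ioi]
  constructor
  · rw [← (Measure.measurePreserving_neg (volume : Measure ℝ)).integrableOn_comp_preimage
      (Homeomorph.neg ℝ).measurableEmbedding]
    simp only [Function.comp_def, abs_neg, neg_preimage, neg_Iio, neg_zero]
    exact (exp_neg_integrableOn_Ioi 0 hc).congr_fun
      (fun x hx => by rw [abs_of_pos hx]) measurableSet_Ioi
  · exact (exp_neg_integrableOn_Ioi 0 hc).congr_fun
      (fun x hx => by rw [abs_of_pos hx]) measurableSet_Ioi

theorem stmt_11 (σ α : ℝ) (hσ : 0 < σ) (hα : 0 < α)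
    (Φ Ψ : ℝ → ℝ)
    (hΦ : ContDiff ℝ 2 Φ) (hΨc : Continuous Ψ)
    (hΦ2 : MemLp Φ 2 (volume : Measure ℝ))
    (hΦ'2 : MemLp (deriv Φ) 2 (volume : Measure ℝ))
    (hΨ2 : MemLp Ψ 2 (volume : Measure ℝ))
    (heq : ∀ x, -(deriv (deriv Φ) x) + σ * Φ x = α * Ψ x * Φ x)
    (hΨ0 : Tendsto Ψ (cocompact ℝ) (nhds 0)) :
    ∃ δ > 0, ∃ C > 0,
      (Integrable (fun x : ℝ => Real.exp (δ * |x|) * Φ x ^ 2) (volume : Measure ℝ)) ∧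
      ∫ x : ℝ, Real.exp (δ * |x|) * Φ x ^ 2 ≤ C := by
  -- smoothness facts
  have hΦd : Differentiable ℝ Φ := hΦ.differentiable two_ne_zero
  have hΦ1 : ContDiff ℝ 1 (deriv Φ) :=
    (contDiff_succ_iff_deriv.mp (show ContDiff ℝ (1 + 1) Φ by exact_mod_cast hΦ)).2.2
  have hΦ'd : Differentiable ℝ (deriv Φ) := hΦ1.differentiable one_ne_zero
  have hΦc : Continuous Φ := hΦ.continuous
  have hΦ'c : Continuous (deriv Φ) := hΦ1.continuous
  have hdd : deriv (deriv Φ) = fun x => (σ - α * Ψ x) * Φ x := by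
    funext x; have := heq x; ring_nf; ring_nf at this; linarith
  -- Ψ bounded
  obtain ⟨W, hW⟩ : ∃ W, ∀ x, |Ψ x| ≤ W := by
    have h1 : ∀ᶠ x in cocompact ℝ, |Ψ x| < 1 := by
      simpa [Real.dist_eq] using Metric.tendsto_nhds.mp hΨ0 1 one_pos
    obtain ⟨K, hK, hKs⟩ := mem_cocompact.mp h1
    obtain ⟨B, hB⟩ := hK.exists_bound_of_continuousOn hΨc.continuousOn
    refine ⟨max B 1, fun x => ?_⟩
    by_cases hx : x ∈ K
    · exact le_max_of_le_left (hB x hx)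
    · exact le_max_of_le_right (hKs hx).le
  have hdd2 : MemLp (deriv (deriv Φ)) 2 (volume : Measure ℝ) := by
    rw [hdd]
    refine MemLp.of_le_mul (c := σ + α * W) hΦ2
      (((continuous_const.sub (continuous_const.mul hΨc)).mul hΦc).aestronglyMeasurable)
      (Filter.Eventually.of_forall fun x => ?_)
    rw [Real.norm_eq_abs, Real.norm_eq_abs, abs_mul]
    have h1 : |σ - α * Ψ x| ≤ σ + α * W := by
      have := hW x
      have := abs_nonneg (Ψ x)
      rw [abs_le]
      constructor <;> nlinarith [neg_abs_le (Ψ x), le_abs_self (Ψ x)]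
    exact mul_le_mul_of_nonneg_right h1 (abs_nonneg _) |>.trans_eq rfl
  -- derivative facts for u = Φ^2
  set u : ℝ → ℝ := fun x => Φ x ^ 2 with hu_def
  set u' : ℝ → ℝ := fun x => 2 * Φ x * deriv Φ x with hu'_def
  set u'' : ℝ → ℝ := fun x => 2 * (deriv Φ x ^ 2 + Φ x * deriv (deriv Φ) x) with hu''_def
  have hud : ∀ x, HasDerivAt u (u' x) x := by
    intro x
    simpa [u, u', pow_one] using ((hΦd x).hasDerivAt.fun_pow 2)
  have hu'd : ∀ x, HasDerivAt u' (u'' x) x := by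
    intro x
    have h := ((hΦd x).hasDerivAt.mul (hΦ'd x).hasDerivAt).const_mul 2
    simpa [u', u'', mul_assoc, mul_add, sq] using h
  -- integrability
  have huint : Integrable u volume := hΦ2.integrable_sq
  have hu'int : Integrable u' volume := by
    simpa [u', mul_assoc] using (l2_mul_int hΦ2 hΦ'2).const_mul 2
  have hvint : Integrable (fun x => deriv Φ x ^ 2) volume := hΦ'2.integrable_sq
  have hu''int : Integrable u'' volume := by
    have h1 := l2_mul_int hΦ'2 hΦ'2
    have h2 := l2_mul_int hΦ2 hdd2
    simpa [u'', mul_add, sq] using ((h1.add h2).const_mul 2)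
  -- limits at infinity
  have hutop : Tendsto u atTop (nhds 0) :=
    tendsto_zero_of_hasDerivAt_of_integrableOn_Ioi (a := 0)
      (fun x _ => hud x) hu'int.integrableOn huint.integrableOn
  have hubot : Tendsto u atBot (nhds 0) :=
    tendsto_zero_of_hasDerivAt_of_integrableOn_Iic (a := 0)
      (fun x _ => hud x) hu'int.integrableOn huint.integrableOn
  have hu'top : Tendsto u' atTop (nhds 0) :=
    tendsto_zero_of_hasDerivAt_of_integrableOn_Ioi (a := 0)
      (fun x _ => hu'd x) hu''int.integrableOn hu'int.integrableOn
  have hu'bot : Tendsto u' atBot (nhds 0) :=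
    tendsto_zero_of_hasDerivAt_of_integrableOn_Iic (a := 0)
      (fun x _ => hu'd x) hu''int.integrableOn hu'int.integrableOn
  -- choose R
  obtain ⟨R, hR0, hRψ⟩ : ∃ R : ℝ, 0 < R ∧ ∀ x : ℝ, R ≤ |x| → α * Ψ x ≤ σ / 2 := by
    have h0 : Tendsto (fun x => α * Ψ x) (cocompact ℝ) (nhds 0) := by
      simpa using hΨ0.const_mul α
    have h1 : ∀ᶠ x in cocompact ℝ, α * Ψ x < σ / 2 :=
      (tendsto_order.1 h0).2 _ (by positivity)
    rw [cocompact_eq_atBot_atTop, eventually_sup] at h1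
    obtain ⟨hbot, htop⟩ := h1
    obtain ⟨b, hb⟩ := eventually_atBot.mp hbot
    obtain ⟨c, hc⟩ := eventually_atTop.mp htop
    refine ⟨max 1 (max (-b) c), lt_of_lt_of_le one_pos (le_max_left _ _), fun x hx => ?_⟩
    rcases abs_cases x with ⟨h, _⟩ | ⟨h, _⟩
    · refine (hc x ?_).le
      calc c ≤ max 1 (max (-b) c) := le_trans (le_max_right _ _) (le_max_right _ _)
        _ ≤ |x| := hx
        _ = x := h
    · refine (hb x ?_).le
      have : -b ≤ |x| := le_trans (le_trans (le_max_left _ _) (le_max_right _ _)) hx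
      rw [h] at this; linarith
  -- k = sqrt σ
  set k : ℝ := Real.sqrt σ with hk_def
  have hk : 0 < k := Real.sqrt_pos.mpr hσ
  have hk2 : k * k = σ := Real.mul_self_sqrt hσ.le
  -- key differential inequality : σ u ≤ u'' for R ≤ |x|
  have hkey : ∀ x : ℝ, R ≤ |x| → σ * u x ≤ u'' x := by
    intro x hx
    have h1 : α * Ψ x ≤ σ / 2 := hRψ x hx
    simp only [u, u'', hdd]
    nlinarith [sq_nonneg (deriv Φ x), sq_nonneg (Φ x)]
  -- continuity of u, u', u''
  have huc : Continuous u := hu_def ▸ (hΦc.pow 2)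
  have hu'c : Continuous u' := hu'_def ▸ ((continuous_const.mul hΦc).mul hΦ'c)
  have hddc : Continuous (deriv (deriv Φ)) := by
    rw [hdd]; exact (continuous_const.sub (continuous_const.mul hΨc)).mul hΦc
  have hu''c : Continuous u'' :=
    hu''_def ▸ (continuous_const.mul ((hΦ'c.pow 2).add (hΦc.mul hddc)))
  -- exp limits
  have hexp_top : Tendsto (fun y : ℝ => Real.exp (-k * y)) atTop (nhds 0) :=
    Real.tendsto_exp_atBot.comp (tendsto_id.const_mul_atTop_of_neg (neg_neg_iff_pos.2 hk))
  have hexp_bot : Tendsto (fun y : ℝ => Real.exp (k * y)) atBot (nhds 0) :=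
    Real.tendsto_exp_atBot.comp (tendsto_id.const_mul_atBot hk)
  ---- RIGHT SIDE ----
  set q : ℝ → ℝ := fun x => u' x + k * u x with hq_def
  have hqc : Continuous q := hq_def ▸ (hu'c.add (continuous_const.mul huc))
  have hqd : ∀ x, HasDerivAt q (u'' x + k * u' x) x :=
    fun x => (hu'd x).add ((hud x).const_mul k)
  have hqtop : Tendsto q atTop (nhds 0) := by
    have := hu'top.add (hutop.const_mul k)
    simpa using this
  have hed : ∀ x : ℝ, HasDerivAt (fun y => Real.exp (-k * y)) (Real.exp (-k * x) * (-k)) x := by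
    intro x
    simpa using (((hasDerivAt_id x).const_mul (-k)).exp)
  have hgd : ∀ x, HasDerivAt (fun y => Real.exp (-k * y) * q y)
      (Real.exp (-k * x) * (-k) * q x + Real.exp (-k * x) * (u'' x + k * u' x)) x :=
    fun x => (hed x).mul (hqd x)
  have hgmono : MonotoneOn (fun y => Real.exp (-k * y) * q y) (Ici R) := by
    apply monotoneOn_of_deriv_nonneg (convex_Ici R)
    · exact ((Real.continuous_exp.comp (continuous_const.mul continuous_id)).mul hqc).continuousOn
    · exact fun x _ => (hgd x).differentiableAt.differentiableWithinAt
    · intro x hx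
      rw [interior_Ici] at hx
      rw [(hgd x).deriv]
      have hxR : R ≤ |x| := le_trans (le_of_lt hx) (le_abs_self x)
      have h1 : σ * u x ≤ u'' x := hkey x hxR
      have h2 := mul_le_mul_of_nonneg_left h1 (Real.exp_pos (-k * x)).le
      have h3 : Real.exp (-k * x) * (k * k * u x) ≤ Real.exp (-k * x) * u'' x := by
        rw [hk2]; exact h2
      simp only [hq_def]
      nlinarith [h3]
  have hqle : ∀ x, R ≤ x → q x ≤ 0 := by
    intro x hx
    have hlim : Tendsto (fun y => Real.exp (-k * y) * q y) atTop (nhds 0) := by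
      simpa using hexp_top.mul hqtop
    have hev : ∀ᶠ y in atTop, Real.exp (-k * x) * q x ≤ Real.exp (-k * y) * q y :=
      (eventually_ge_atTop x).mono fun y hy => hgmono hx (le_trans hx hy) hy
    have h0 := ge_of_tendsto hlim hev
    nlinarith [Real.exp_pos (-k * x)]
  have hed2 : ∀ x : ℝ, HasDerivAt (fun y => Real.exp (k * y)) (Real.exp (k * x) * k) x := by
    intro x
    simpa using (((hasDerivAt_id x).const_mul k).exp)
  have hhd : ∀ x, HasDerivAt (fun y => Real.exp (k * y) * u y)
      (Real.exp (k * x) * k * u x + Real.exp (k * x) * u' x) x :=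
    fun x => (hed2 x).mul (hud x)
  have hanti : AntitoneOn (fun y => Real.exp (k * y) * u y) (Ici R) := by
    apply antitoneOn_of_deriv_nonpos (convex_Ici R)
    · exact ((Real.continuous_exp.comp (continuous_const.mul continuous_id)).mul huc).continuousOn
    · exact fun x _ => (hhd x).differentiableAt.differentiableWithinAt
    · intro x hx
      rw [interior_Ici] at hx
      rw [(hhd x).deriv]
      have h1 : q x ≤ 0 := hqle x hx.le
      simp only [hq_def] at h1
      have h2 := mul_le_mul_of_nonneg_left h1 (Real.exp_pos (k * x)).le
      nlinarith [h2]
  have huR : ∀ x, R ≤ x → u x ≤ (Real.exp (k * R) * u R) * Real.exp (-k * x) := by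
    intro x hx
    have h1 : Real.exp (k * x) * u x ≤ Real.exp (k * R) * u R :=
      hanti self_mem_Ici hx hx
    have h2 := mul_le_mul_of_nonneg_left h1 (Real.exp_pos (-k * x)).le
    calc u x = Real.exp (-k * x) * (Real.exp (k * x) * u x) := by
          rw [← mul_assoc, ← Real.exp_add, show -k * x + k * x = 0 by ring, Real.exp_zero, one_mul]
      _ ≤ Real.exp (-k * x) * (Real.exp (k * R) * u R) := h2
      _ = (Real.exp (k * R) * u R) * Real.exp (-k * x) := by ring
  ---- LEFT SIDE ----
  set p : ℝ → ℝ := fun x => u' x - k * u x with hp_def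
  have hpc : Continuous p := hp_def ▸ (hu'c.sub (continuous_const.mul huc))
  have hpd : ∀ x, HasDerivAt p (u'' x - k * u' x) x :=
    fun x => (hu'd x).sub ((hud x).const_mul k)
  have hpbot : Tendsto p atBot (nhds 0) := by
    have := hu'bot.sub (hubot.const_mul k)
    simpa using this
  have hg2d : ∀ x, HasDerivAt (fun y => Real.exp (k * y) * p y)
      (Real.exp (k * x) * k * p x + Real.exp (k * x) * (u'' x - k * u' x)) x :=
    fun x => (hed2 x).mul (hpd x)
  have hg2mono : MonotoneOn (fun y => Real.exp (k * y) * p y) (Iic (-R)) := by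
    apply monotoneOn_of_deriv_nonneg (convex_Iic (-R))
    · exact ((Real.continuous_exp.comp (continuous_const.mul continuous_id)).mul hpc).continuousOn
    · exact fun x _ => (hg2d x).differentiableAt.differentiableWithinAt
    · intro x hx
      rw [interior_Iic] at hx
      rw [(hg2d x).deriv]
      have hx' : x < -R := hx
      have hxR : R ≤ |x| := by
        rw [abs_of_neg (by linarith)]; linarith
      have h1 : σ * u x ≤ u'' x := hkey x hxR
      have h2 := mul_le_mul_of_nonneg_left h1 (Real.exp_pos (k * x)).le
      have h3 : Real.exp (k * x) * (k * k * u x) ≤ Real.exp (k * x) * u'' x := by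
        rw [hk2]; exact h2
      simp only [hp_def]
      nlinarith [h3]
  have hpge : ∀ x, x ≤ -R → 0 ≤ p x := by
    intro x hx
    have hlim : Tendsto (fun y => Real.exp (k * y) * p y) atBot (nhds 0) := by
      simpa using hexp_bot.mul hpbot
    have hev : ∀ᶠ y in atBot, Real.exp (k * y) * p y ≤ Real.exp (k * x) * p x :=
      (eventually_le_atBot x).mono fun y hy => hg2mono (le_trans hy hx) hx hy
    have h0 := le_of_tendsto hlim hev
    nlinarith [Real.exp_pos (k * x)]
  have hmono2 : MonotoneOn (fun y => Real.exp (-k * y) * u y) (Iic (-R)) := by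
    apply monotoneOn_of_deriv_nonneg (convex_Iic (-R))
    · exact ((Real.continuous_exp.comp (continuous_const.mul continuous_id)).mul huc).continuousOn
    · exact fun x _ => ((hed x).mul (hud x)).differentiableAt.differentiableWithinAt
    · intro x hx
      rw [interior_Iic] at hx
      rw [((hed x).fun_mul (hud x)).deriv]
      have hx' : x < -R := hx
      have h1 : 0 ≤ p x := hpge x hx'.le
      simp only [hp_def] at h1
      have h2 := mul_le_mul_of_nonneg_left h1 (Real.exp_pos (-k * x)).le
      nlinarith [h2]
  have huL : ∀ x, x ≤ -R → u x ≤ (Real.exp (k * R) * u (-R)) * Real.exp (k * x) := by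
    intro x hx
    have h1 : Real.exp (-k * x) * u x ≤ Real.exp (-k * -R) * u (-R) :=
      hmono2 hx self_mem_Iic hx
    rw [show -k * -R = k * R by ring] at h1
    have h2 := mul_le_mul_of_nonneg_left h1 (Real.exp_pos (k * x)).le
    calc u x = Real.exp (k * x) * (Real.exp (-k * x) * u x) := by
          rw [← mul_assoc, ← Real.exp_add, show k * x + -k * x = 0 by ring, Real.exp_zero, one_mul]
      _ ≤ Real.exp (k * x) * (Real.exp (k * R) * u (-R)) := h2
      _ = (Real.exp (k * R) * u (-R)) * Real.exp (k * x) := by ring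
  ---- MIDDLE and combine ----
  obtain ⟨B, hB⟩ := (isCompact_Icc (a := -R) (b := R)).exists_bound_of_continuousOn huc.continuousOn
  set M : ℝ := max (max (Real.exp (k * R) * u R) (Real.exp (k * R) * u (-R)))
    (B * Real.exp (k * R)) with hM_def
  have hB0 : 0 ≤ B := le_trans (norm_nonneg _) (hB 0 (by constructor <;> linarith))
  have hM0 : 0 ≤ M := le_trans (by positivity) (le_max_right _ _)
  have hMbound : ∀ x : ℝ, u x ≤ M * Real.exp (-k * |x|) := by
    intro x
    rcases le_or_gt R x with hx | hx
    · rw [abs_of_pos (lt_of_lt_of_le hR0 hx)]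
      refine le_trans (huR x hx) ?_
      exact mul_le_mul_of_nonneg_right
        (le_trans (le_max_left _ _) (le_max_left _ _)) (Real.exp_pos _).le
    rcases le_or_gt x (-R) with hx' | hx'
    · rw [abs_of_neg (show x < 0 by linarith), show -k * -x = k * x by ring]
      refine le_trans (huL x hx') ?_
      exact mul_le_mul_of_nonneg_right
        (le_trans (le_max_right _ _) (le_max_left _ _)) (Real.exp_pos _).le
    · have hxI : x ∈ Icc (-R) R := ⟨hx'.le, hx.le⟩
      have h1 : u x ≤ B := le_trans (le_abs_self _) (hB x hxI)
      have h2 : Real.exp (-k * R) ≤ Real.exp (-k * |x|) := by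
        apply Real.exp_le_exp.mpr
        have : |x| ≤ R := abs_le.mpr ⟨hx'.le, hx.le⟩
        nlinarith
      calc u x ≤ B := h1
        _ = B * Real.exp (k * R) * Real.exp (-k * R) := by
            rw [mul_assoc, ← Real.exp_add, show k * R + -k * R = 0 by ring, Real.exp_zero, mul_one]
        _ ≤ B * Real.exp (k * R) * Real.exp (-k * |x|) :=
            mul_le_mul_of_nonneg_left h2 (by positivity)
        _ ≤ M * Real.exp (-k * |x|) :=
            mul_le_mul_of_nonneg_right (le_max_right _ _) (Real.exp_pos _).le
  ---- CONCLUSION ----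
  refine ⟨k / 2, by positivity, ?_⟩
  have hδ : (0 : ℝ) < k / 2 := by positivity
  have hpt : ∀ x : ℝ, Real.exp (k / 2 * |x|) * u x ≤ M * Real.exp (-(k / 2) * |x|) := by
    intro x
    have h1 := mul_le_mul_of_nonneg_left (hMbound x) (Real.exp_pos (k / 2 * |x|)).le
    refine le_trans h1 (le_of_eq ?_)
    rw [mul_comm (Real.exp (k / 2 * |x|)) (M * Real.exp (-k * |x|)), mul_assoc,
      ← Real.exp_add]
    ring_nf
  have hdom : Integrable (fun x : ℝ => M * Real.exp (-(k / 2) * |x|)) volume :=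
    (integrable_exp_neg_abs' hδ).const_mul M
  have hint : Integrable (fun x : ℝ => Real.exp (k / 2 * |x|) * u x) volume := by
    refine hdom.mono' ?_ (Filter.Eventually.of_forall fun x => ?_)
    · exact ((Real.continuous_exp.comp (continuous_const.mul continuous_abs)).mul
        huc).aestronglyMeasurable
    · rw [Real.norm_eq_abs, abs_of_nonneg (by positivity)]
      exact hpt x
  refine ⟨M * (∫ x : ℝ, Real.exp (-(k / 2) * |x|)) + 1, ?_, hint, ?_⟩
  · have : 0 ≤ ∫ x : ℝ, Real.exp (-(k / 2) * |x|) :=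
      integral_nonneg fun x => (Real.exp_pos _).le
    nlinarith
  · have h1 : ∫ x : ℝ, Real.exp (k / 2 * |x|) * u x
        ≤ ∫ x : ℝ, M * Real.exp (-(k / 2) * |x|) :=
      integral_mono hint hdom hpt
    rw [integral_const_mul] at h1
    linarith
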